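/- Let n be a positive integer and z₁,…,zₙ integers with z₁ + … + zₙ = 1. For θ ∈ ℝ let k(θ) be the diagonal n×n complex matrix with entries e^{i·n·z₁·θ}, …, e^{i·n·zₙ·θ}. Then: (i) k(θ) is unitary for every θ; (ii) if k(θ) has determinant 1 (i.e., lies in SU(n)) then k(θ) is the identity matrix; and (iii) every unitary n×n matrix u can be written as u = g·k(θ) for some g ∈ SU(n) and some θ ∈ ℝ. Hence K = {k(θ) : θ ∈ ℝ} is a complement of SU(n) in U(n). -/

import Mathlib

open Matrix

/-- **Complements of `SU(n)` in `U(n)` (Section 5.3/5.4).**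
Let `z₁,…,zₙ` be integers with `z₁ + ⋯ + zₙ = 1` and for `θ ∈ ℝ` let
`k(θ) = diag(e^{i n z₁ θ}, …, e^{i n zₙ θ})`.  Then (i) each `k(θ)` is unitary; (ii) if
`k(θ)` has determinant `1` then `k(θ) = 1`; and (iii) every unitary matrix `u` factors as
`u = g · k(θ)` with `g` special unitary.  Hence `K = {k(θ)}` is a complement of `SU(n)`
in `U(n)`. -/
theorem complement_of_SU_in_U (n : ℕ) (hn : 0 < n) (z : Fin n → ℤ) (hz : ∑ i, z i = 1)
    (k : ℝ → Matrix (Fin n) (Fin n) ℂ)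
    (hk : ∀ θ : ℝ, k θ =
      Matrix.diagonal fun i => Complex.exp (Complex.I * n * (z i : ℂ) * (θ : ℂ))) :
    (∀ θ : ℝ, k θ ∈ Matrix.unitaryGroup (Fin n) ℂ) ∧
    (∀ θ : ℝ, (k θ).det = 1 → k θ = 1) ∧
    (∀ u ∈ Matrix.unitaryGroup (Fin n) ℂ,
      ∃ g ∈ Matrix.specialUnitaryGroup (Fin n) ℂ, ∃ θ : ℝ, u = g * k θ) := by
  -- conjugate of each diagonal entry is its inverse
  have hstar : ∀ (θ : ℝ) (i : Fin n),
      (starRingEnd ℂ) (Complex.exp (Complex.I * n * (z i : ℂ) * (θ : ℂ)))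
        = Complex.exp (-(Complex.I * n * (z i : ℂ) * (θ : ℂ))) := by
    intro θ i
    rw [← Complex.exp_conj]
    congr 1
    simp only [_root_.map_mul, Complex.conj_I, map_intCast, map_natCast, Complex.conj_ofReal]
    ring
  have hunit : ∀ θ : ℝ, k θ ∈ Matrix.unitaryGroup (Fin n) ℂ := by
    intro θ
    rw [Matrix.mem_unitaryGroup_iff, hk θ, Matrix.star_eq_conjTranspose,
      Matrix.diagonal_conjTranspose,
      Matrix.diagonal_mul_diagonal]
    have key : (fun i => Complex.exp (Complex.I * n * (z i : ℂ) * (θ : ℂ)) *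
        Star.star (Complex.exp (Complex.I * n * (z i : ℂ) * (θ : ℂ)))) = fun _ => (1 : ℂ) := by
      funext i
      rw [RCLike.star_def, hstar θ i, ← Complex.exp_add]
      simp
    calc Matrix.diagonal (fun i => Complex.exp (Complex.I * n * (z i : ℂ) * (θ : ℂ)) *
          Star.star (Complex.exp (Complex.I * n * (z i : ℂ) * (θ : ℂ))))
        = Matrix.diagonal (fun _ => (1 : ℂ)) := by rw [key]
      _ = 1 := Matrix.diagonal_one
  have hdet : ∀ θ : ℝ, (k θ).det = Complex.exp (Complex.I * n * θ) := by
    intro θ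
    rw [hk θ, Matrix.det_diagonal, ← Complex.exp_sum]
    congr 1
    rw [← Finset.sum_mul, ← Finset.mul_sum]
    have : (∑ i, (z i : ℂ)) = 1 := by
      rw [← Int.cast_sum, hz]; norm_num
    rw [this]; ring
  refine ⟨hunit, ?_, ?_⟩
  · intro θ hdet1
    rw [hdet θ, Complex.exp_eq_one_iff] at hdet1
    obtain ⟨m, hm⟩ := hdet1
    have hnθ : (n : ℂ) * θ = m * (2 * Real.pi) := by
      have := hm
      have hI : Complex.I * ((n : ℂ) * θ) = Complex.I * (m * (2 * Real.pi)) := by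
        rw [mul_comm Complex.I]
        calc (n : ℂ) * θ * Complex.I = Complex.I * n * θ := by ring
        _ = m * (2 * Real.pi * Complex.I) := hm
        _ = Complex.I * (m * (2 * Real.pi)) := by ring
      exact mul_left_cancel₀ Complex.I_ne_zero hI
    have key : ∀ i : Fin n, Complex.exp (Complex.I * n * (z i : ℂ) * (θ : ℂ)) = 1 := by
      intro i
      rw [show Complex.I * n * (z i : ℂ) * θ = (z i : ℂ) * ((n : ℂ) * θ) * Complex.I by ring,
      hnθ, show (z i : ℂ) * (m * (2 * Real.pi)) * Complex.I
        = ((z i * m : ℤ) : ℂ) * (2 * Real.pi * Complex.I) by push_cast; ring,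
      Complex.exp_eq_one_iff.2 ⟨z i * m, rfl⟩]
    rw [hk θ, funext key, Matrix.diagonal_one]
  · intro u hu
    set θ : ℝ := Complex.arg u.det / n with hθ
    have hn' : (n : ℂ) ≠ 0 := Nat.cast_ne_zero.2 hn.ne'
    have habs : ‖u.det‖ = 1 := by
      have hmem : u.det ∈ unitary ℂ := Matrix.det_of_mem_unitary hu
      have h1 : (starRingEnd ℂ) u.det * u.det = 1 := (Unitary.mem_iff.mp hmem).1
      have h2 : ((Complex.normSq u.det : ℝ) : ℂ) = 1 := by
        rw [← h1, mul_comm, Complex.mul_conj]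
      have h3 : Complex.normSq u.det = 1 := by exact_mod_cast h2
      rw [Complex.norm_def, h3, Real.sqrt_one]
    have hdetθ : (k θ).det = u.det := by
      rw [hdet θ]
      have : Complex.I * n * θ = (Complex.arg u.det : ℂ) * Complex.I := by
        rw [hθ]
        push_cast
        field_simp
      rw [this]
      conv_rhs => rw [← Complex.norm_mul_exp_arg_mul_I u.det]
      rw [habs]
      norm_num
    refine ⟨u * star (k θ), ?_, θ, ?_⟩
    · rw [Matrix.mem_specialUnitaryGroup_iff]
      have hkinv : star (k θ) ∈ Matrix.unitaryGroup (Fin n) ℂ :=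
        Unitary.star_mem (hunit θ)
      refine ⟨mul_mem hu hkinv, ?_⟩
      have hkk : star (k θ) * k θ = 1 := (Unitary.mem_iff.mp (hunit θ)).1
      have hdd : (star (k θ)).det * (k θ).det = 1 := by
        rw [← Matrix.det_mul, hkk, Matrix.det_one]
      rw [Matrix.det_mul]
      calc u.det * (star (k θ)).det = (star (k θ)).det * (k θ).det := by rw [hdetθ]; ring
      _ = 1 := hdd
    · have hkk : star (k θ) * k θ = 1 := (Unitary.mem_iff.mp (hunit θ)).1
      rw [mul_assoc, hkk, mul_one]
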